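/- Let q1, q2, q3, q4 be four points in the Euclidean plane ℝ² with q2 − q1 = t • (q3 − q4) for some t > 0 and q1, q2, q4 not collinear; let r_ij denote their mutual distances, assume the ordering r13 ≥ r24 > r12 ≥ r14 ≥ r23 ≥ r34, and suppose positive masses m1, m2, m3, m4 and real numbers λ, σ satisfy the trapezoidal central configuration equations for these distances. If m1 = m3, then the configuration is a rhombus (r12 = r23 = r34 = r14) and the remaining two masses are equal: m2 = m4. -/

import Mathlib

lemma rhombus_core
    (u v w s b m1 m2 m4 lam sig : ℝ)
    (hu : 0 < u) (hs : 0 < s) (hub : u < b)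
    (hvu : v ≤ u) (hwv : w ≤ v) (hsw : s ≤ w)
    (hm1 : 0 < m1) (hm2 : 0 < m2) (hm4 : 0 < m4)
    (h12 : m1 * m2 * ((u^3)⁻¹ - lam) = sig * s^2)
    (h34 : m1 * m4 * ((s^3)⁻¹ - lam) = sig * u^2)
    (h24 : m2 * m4 * ((b^3)⁻¹ - lam) = -(sig * u * s))
    (h14 : m1 * m4 * ((v^3)⁻¹ - lam) = sig * u * s)
    (h23 : m2 * m1 * ((w^3)⁻¹ - lam) = sig * u * s) :
    (u = w ∧ w = s ∧ s = v) ∧ m2 = m4 := by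
  have hw : 0 < w := lt_of_lt_of_le hs hsw
  have hv : 0 < v := lt_of_lt_of_le hw hwv
  have hbp : 0 < b := hu.trans hub
  have hu3 : (0:ℝ) < u^3 := pow_pos hu 3
  have hb3 : (0:ℝ) < b^3 := pow_pos hbp 3
  have hw3 : (0:ℝ) < w^3 := pow_pos hw 3
  have hv3 : (0:ℝ) < v^3 := pow_pos hv 3
  have hs3 : (0:ℝ) < s^3 := pow_pos hs 3
  have hbu : (b^3)⁻¹ < (u^3)⁻¹ := by
    apply inv_strictAnti₀ hu3
    exact pow_lt_pow_left₀ hub hu.le (by norm_num)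
  have hsig : 0 < sig := by
    by_contra hcon
    push_neg at hcon
    have h1 : (u ^ 3)⁻¹ - lam ≤ 0 := by nlinarith [mul_pos hm1 hm2, sq_nonneg s]
    have h2 : 0 ≤ (b ^ 3)⁻¹ - lam := by nlinarith [mul_pos hm2 hm4, mul_pos hu hs]
    linarith
  have hfb : (b^3)⁻¹ - lam < 0 := by
    nlinarith [mul_pos hm2 hm4, mul_pos (mul_pos hsig hu) hs]
  have hlam : 0 < lam := by
    have : (0:ℝ) < (b^3)⁻¹ := inv_pos.mpr hb3
    linarith
  have hm12 : (0:ℝ) < m1 * m2 := mul_pos hm1 hm2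
  have hm14 : (0:ℝ) < m1 * m4 := mul_pos hm1 hm4
  have hA : u * ((u^3)⁻¹ - lam) = s * ((w^3)⁻¹ - lam) := by
    have h0 : m1 * m2 * (u * ((u^3)⁻¹ - lam) - s * ((w^3)⁻¹ - lam)) = 0 := by
      linear_combination u * h12 - s * h23
    rcases mul_eq_zero.mp h0 with h | h
    · exact absurd h hm12.ne'
    · linarith
  have hB : s * ((s^3)⁻¹ - lam) = u * ((v^3)⁻¹ - lam) := by
    have h0 : m1 * m4 * (s * ((s^3)⁻¹ - lam) - u * ((v^3)⁻¹ - lam)) = 0 := by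
      linear_combination s * h34 - u * h14
    rcases mul_eq_zero.mp h0 with h | h
    · exact absurd h hm14.ne'
    · linarith
  have hus : u ≤ s := by
    by_contra hcon
    push_neg at hcon
    have hvw : (v^3)⁻¹ ≤ (w^3)⁻¹ := by
      apply inv_anti₀ hw3
      exact pow_le_pow_left₀ hw.le hwv 3
    have hstar : u * (u^3)⁻¹ + s * (s^3)⁻¹ = s * (w^3)⁻¹ + u * (v^3)⁻¹ := by
      linear_combination hA + hB
    have hA' : u * (u^3)⁻¹ - s * (w^3)⁻¹ = lam * (u - s) := by linear_combination hA
    have hI2 : s * (w^3)⁻¹ < u * (u^3)⁻¹ := by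
      have := mul_pos hlam (sub_pos.mpr hcon)
      linarith
    have hI1 : u * (u^3)⁻¹ + s * (s^3)⁻¹ ≤ u * (w^3)⁻¹ + s * (w^3)⁻¹ := by
      have := mul_le_mul_of_nonneg_left hvw hu.le
      linarith
    have k1 : s * (s^3)⁻¹ < u * (w^3)⁻¹ := by linarith
    have k2 : s * (s * (s^3)⁻¹) < s * (u * (w^3)⁻¹) := by
      exact mul_lt_mul_of_pos_left k1 hs
    have k3 : u * (s * (w^3)⁻¹) < u * (u * (u^3)⁻¹) := mul_lt_mul_of_pos_left hI2 hu
    have k4 : s^2 * (s^3)⁻¹ < u^2 * (u^3)⁻¹ := by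
      have e2' : s * (s * (s^3)⁻¹) = s^2 * (s^3)⁻¹ := by ring
      have e2'' : u * (u * (u^3)⁻¹) = u^2 * (u^3)⁻¹ := by ring
      have e2''' : s * (u * (w^3)⁻¹) = u * (s * (w^3)⁻¹) := by ring
      linarith
    have e3 : s^2 * (s^3)⁻¹ = s⁻¹ := by
      field_simp
    have e4 : u^2 * (u^3)⁻¹ = u⁻¹ := by
      field_simp
    have k5 : s⁻¹ < u⁻¹ := by rw [← e3, ← e4]; exact k4
    have : u < s := by
      have := (inv_lt_inv₀ hs hu).mp k5
      exact this
    linarith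
  have huw : u = w := le_antisymm (hus.trans hsw) (hwv.trans hvu)
  have hws : w = s := le_antisymm (by linarith) hsw
  have hsv : s = v := le_antisymm (hsw.trans hwv) (hvu.trans hus)
  refine ⟨⟨huw, hws, hsv⟩, ?_⟩
  have hvw' : v = w := by rw [← hsv, hws]
  have hfv : 0 < (v^3)⁻¹ - lam := by
    have hr : 0 < sig * u * s := mul_pos (mul_pos hsig hu) hs
    have h' : 0 < m1 * m4 * ((v^3)⁻¹ - lam) := by rw [h14]; exact hr
    by_contra hcon
    push_neg at hcon
    have : m1 * m4 * ((v^3)⁻¹ - lam) ≤ 0 :=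
      mul_nonpos_of_nonneg_of_nonpos hm14.le hcon
    linarith
  have h23' : m2 * m1 * ((v^3)⁻¹ - lam) = sig * u * s := by rw [hvw']; exact h23
  have h0 : (m4 - m2) * (m1 * ((v^3)⁻¹ - lam)) = 0 := by linear_combination h14 - h23'
  rcases mul_eq_zero.mp h0 with h | h
  · linarith [sub_eq_zero.mp h]
  · exfalso
    rcases mul_eq_zero.mp h with h' | h'
    · exact hm1.ne' h'
    · exact hfv.ne' h'

theorem rhombus_of_m1_eq_m3
    (q1 q2 q3 q4 : EuclideanSpace ℝ (Fin 2)) (t : ℝ)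
    (ht : 0 < t) (hpar : q2 - q1 = t • (q3 - q4))
    (hncol : ¬ Collinear ℝ ({q1, q2, q4} : Set (EuclideanSpace ℝ (Fin 2))))
    (hord1 : dist q2 q4 ≤ dist q1 q3) (hord2 : dist q1 q2 < dist q2 q4)
    (hord3 : dist q1 q4 ≤ dist q1 q2) (hord4 : dist q2 q3 ≤ dist q1 q4)
    (hord5 : dist q3 q4 ≤ dist q2 q3)
    (m1 m2 m3 m4 lam sig : ℝ)
    (hm1 : 0 < m1) (hm2 : 0 < m2) (hm3 : 0 < m3) (hm4 : 0 < m4)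
    (h12 : m1 * m2 * (dist q1 q2 ^ (-3 : ℤ) - lam) = sig * dist q3 q4 ^ 2)
    (h34 : m3 * m4 * (dist q3 q4 ^ (-3 : ℤ) - lam) = sig * dist q1 q2 ^ 2)
    (h13 : m1 * m3 * (dist q1 q3 ^ (-3 : ℤ) - lam) = -(sig * dist q1 q2 * dist q3 q4))
    (h24 : m2 * m4 * (dist q2 q4 ^ (-3 : ℤ) - lam) = -(sig * dist q1 q2 * dist q3 q4))
    (h14 : m1 * m4 * (dist q1 q4 ^ (-3 : ℤ) - lam) = sig * dist q1 q2 * dist q3 q4)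
    (h23 : m2 * m3 * (dist q2 q3 ^ (-3 : ℤ) - lam) = sig * dist q1 q2 * dist q3 q4)
    (hm13 : m1 = m3) :
    (dist q1 q2 = dist q2 q3 ∧ dist q2 q3 = dist q3 q4 ∧ dist q3 q4 = dist q1 q4) ∧
      m2 = m4 := by
  have hq12 : q1 ≠ q2 := by
    intro h
    apply hncol
    rw [h, Set.insert_idem]
    exact collinear_pair ℝ q2 q4
  have hu : 0 < dist q1 q2 := dist_pos.mpr hq12
  have hts : dist q1 q2 = t * dist q3 q4 := by
    rw [dist_comm q1 q2, dist_eq_norm, dist_eq_norm, hpar, norm_smul,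
      Real.norm_eq_abs, abs_of_pos ht]
  have hs : 0 < dist q3 q4 := by
    rcases (dist_nonneg : 0 ≤ dist q3 q4).lt_or_eq with h | h
    · exact h
    · exfalso
      rw [← h, mul_zero] at hts
      linarith
  have hzp : ∀ x : ℝ, x ^ (-3:ℤ) = (x^3)⁻¹ := fun x => by
    rw [zpow_neg, show ((3:ℤ)) = ((3:ℕ):ℤ) from rfl, zpow_natCast]
  simp only [hzp] at h12 h34 h14 h23 h24
  rw [← hm13] at h34 h23
  exact rhombus_core (dist q1 q2) (dist q1 q4) (dist q2 q3) (dist q3 q4) (dist q2 q4)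
    m1 m2 m4 lam sig hu hs hord2 hord3 hord4 hord5 hm1 hm2 hm4 h12 h34 h24 h14 h23
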